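/- arXiv:1604.05485 — 2 statements merged into one kernel-verified Lean document; each statement's English description precedes it below -/
import Mathlib

section
/- Let H_1 and H_2 be complex Hilbert spaces and let T = [[T_1, X],[0, T_2]] be a bounded linear operator on H_1 ⊕ H_2 (so T_1 ∈ L(H_1), T_2 ∈ L(H_2), X ∈ L(H_2, H_1)). Then T is a contraction if and only if T_1 and T_2 are contractions and there exists a contraction Γ from 𝒟_{T_2} to 𝒟_{T_1*} such that X = D_{T_1*} Γ D_{T_2}. -/
noncomputable section

open ContinuousLinearMap

section Defs

variable {H K : Type*} [NormedAddCommGroup H] [InnerProductSpace ℂ H] [CompleteSpace H]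
  [NormedAddCommGroup K] [InnerProductSpace ℂ K] [CompleteSpace K]

/-- The defect operator `D_A = (1 - A* A) ^ (1/2)` of an operator `A : H →L[ℂ] K`. -/
def defectOp (A : H →L[ℂ] K) : H →L[ℂ] H :=
  CFC.sqrt (1 - (adjoint A) ∘L A)

/-- The defect space `𝒟_A`, i.e. the closure of the range of the defect operator `D_A`.
(The defect space `𝒟_{A*}` of the adjoint is `defectSpace (adjoint A)`.) -/
def defectSpace (A : H →L[ℂ] K) : Submodule ℂ H :=
  (LinearMap.range (defectOp A : H →ₗ[ℂ] H)).topologicalClosure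

instance defectSpace.instCompleteSpace (A : H →L[ℂ] K) : CompleteSpace (defectSpace A) :=
  (Submodule.isClosed_topologicalClosure _).completeSpace_coe

/-- The characteristic function of `T` as an operator on the whole space:
`Θ_T(z) = -T + z • D_{T*} (1 - z T*)⁻¹ D_T`. -/
def charFunFull (T : H →L[ℂ] H) (z : ℂ) : H →L[ℂ] H :=
  -T + z • (defectOp (adjoint T) ∘L Ring.inverse (1 - z • adjoint T) ∘L defectOp T)

/-- The characteristic function `Θ_T(z) : 𝒟_T → 𝒟_{T*}`.  For a contraction `T` the operator
`charFunFull T z` maps `𝒟_T` into `𝒟_{T*}`, so composing with the orthogonal projection onto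
`𝒟_{T*}` implements the restriction-corestriction `(-T + z D_{T*}(1 - zT*)⁻¹ D_T)|_{𝒟_T}`. -/
def charFun (T : H →L[ℂ] H) (z : ℂ) : defectSpace T →L[ℂ] defectSpace (adjoint T) :=
  Submodule.orthogonalProjectionOnto (defectSpace (adjoint T)) ∘L charFunFull T z ∘L (defectSpace T).subtypeL

end Defs


section MyAux
open scoped InnerProductSpace
set_option synthInstance.maxHeartbeats 1000000
set_option maxHeartbeats 1000000

variable {H K L : Type*} [NormedAddCommGroup H] [InnerProductSpace ℂ H] [CompleteSpace H]
  [NormedAddCommGroup K] [InnerProductSpace ℂ K] [CompleteSpace K]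
  [NormedAddCommGroup L] [InnerProductSpace ℂ L] [CompleteSpace L]

set_option linter.unusedSectionVars false

lemma one_sub_nonneg (A : H →L[ℂ] K) (hA : ∀ h, ‖A h‖ ≤ ‖h‖) :
    (0 : H →L[ℂ] H) ≤ 1 - adjoint A ∘L A := by
  rw [ContinuousLinearMap.nonneg_iff_isPositive]
  constructor
  · have h2 : IsSelfAdjoint (adjoint A ∘L A) := by
      rw [ContinuousLinearMap.isSelfAdjoint_iff']
      rw [ContinuousLinearMap.adjoint_comp, ContinuousLinearMap.adjoint_adjoint]
    exact ((IsSelfAdjoint.one (H →L[ℂ] H)).sub h2).isSymmetric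
  · intro x
    have hx : reApplyInnerSelf (1 - adjoint A ∘L A) x = ‖x‖ ^ 2 - ‖A x‖ ^ 2 := by
      simp only [reApplyInnerSelf, sub_apply, one_apply, comp_apply, inner_sub_left, map_sub]
      rw [adjoint_inner_left]
      simp [← norm_sq_eq_re_inner (𝕜 := ℂ)]
      norm_cast
    rw [hx]
    have := hA x
    nlinarith [norm_nonneg (A x), norm_nonneg x]

lemma defectOp_selfAdjoint (A : H →L[ℂ] K) : IsSelfAdjoint (defectOp A) :=
  IsSelfAdjoint.of_nonneg (CFC.sqrt_nonneg _)

lemma defectOp_sq (A : H →L[ℂ] K) (hA : ∀ h, ‖A h‖ ≤ ‖h‖) :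
    defectOp A ∘L defectOp A = 1 - adjoint A ∘L A := by
  rw [defectOp, ← ContinuousLinearMap.mul_def, ← sq, CFC.sq_sqrt _ (one_sub_nonneg A hA)]

lemma norm_defectOp_sq (A : H →L[ℂ] K) (hA : ∀ h, ‖A h‖ ≤ ‖h‖) (x : H) :
    ‖defectOp A x‖ ^ 2 = ‖x‖ ^ 2 - ‖A x‖ ^ 2 := by
  have hsym := (ContinuousLinearMap.isSelfAdjoint_iff_isSymmetric.mp (defectOp_selfAdjoint A))
  have h1 : ⟪defectOp A x, defectOp A x⟫_ℂ = ⟪(defectOp A ∘L defectOp A) x, x⟫_ℂ := by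
    rw [comp_apply]
    exact (hsym (defectOp A x) x).symm
  rw [norm_sq_eq_re_inner (𝕜 := ℂ), h1, defectOp_sq A hA]
  simp only [sub_apply, one_apply, comp_apply, inner_sub_left, map_sub]
  rw [adjoint_inner_left]
  simp [← norm_sq_eq_re_inner (𝕜 := ℂ)]
  norm_cast

lemma adjoint_contraction (A : H →L[ℂ] K) (hA : ∀ h, ‖A h‖ ≤ ‖h‖) (k : K) :
    ‖adjoint A k‖ ≤ ‖k‖ := by
  have hn : ‖A‖ ≤ 1 := opNorm_le_bound A zero_le_one (fun h => by simpa using hA h)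
  calc ‖adjoint A k‖ ≤ ‖adjoint A‖ * ‖k‖ := le_opNorm _ _
    _ = ‖A‖ * ‖k‖ := by rw [LinearIsometryEquiv.norm_map adjoint A]
    _ ≤ 1 * ‖k‖ := by gcongr
    _ = ‖k‖ := one_mul _

/-- Douglas-type factorization. -/
lemma douglas (A : H →L[ℂ] L) (B : H →L[ℂ] K) (hAB : ∀ h, ‖A h‖ ≤ ‖B h‖) :
    ∃ C : (LinearMap.range (B : H →ₗ[ℂ] K)).topologicalClosure →L[ℂ] L,
      (∀ x, ‖C x‖ ≤ ‖x‖) ∧ ∀ h : H,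
        C ⟨B h, Submodule.le_topologicalClosure _ (LinearMap.mem_range_self (B : H →ₗ[ℂ] K) h)⟩ = A h := by
  haveI : CompleteSpace ((LinearMap.range (B : H →ₗ[ℂ] K)).topologicalClosure : Submodule ℂ K) :=
    (Submodule.isClosed_topologicalClosure _).completeSpace_coe
  set R : Submodule ℂ K := LinearMap.range (B : H →ₗ[ℂ] K) with hR
  set S : Submodule ℂ K := R.topologicalClosure with hS
  have hRS : R ≤ S := Submodule.le_topologicalClosure R
  have key : ∀ h h' : H, B h = B h' → A h = A h' := by
    intro h h' hbb
    have h1 := hAB (h - h')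
    rw [map_sub, map_sub, hbb, sub_self, norm_zero] at h1
    exact sub_eq_zero.mp (norm_le_zero_iff.mp h1)
  choose g hg0 using fun y : R => y.2
  have hg : ∀ y : R, B (g y) = y := hg0
  set f0 : ↥R →ₗ[ℂ] L :=
  { toFun := fun y => A (g y)
    map_add' := fun y z => by
      show A (g (y + z)) = A (g y) + A (g z)
      have h1 : B (g (y + z)) = B (g y + g z) := by
        rw [map_add, hg, hg, hg]; rfl
      rw [key _ _ h1, map_add]
    map_smul' := fun c y => by
      show A (g (c • y)) = c • A (g y)
      have h1 : B (g (c • y)) = B (c • g y) := by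
        rw [map_smul, hg, hg]; rfl
      rw [key _ _ h1, map_smul] } with hf0
  have hb : ∀ y : ↥R, ‖f0 y‖ ≤ 1 * ‖y‖ := fun y => by
    show ‖A (g y)‖ ≤ 1 * ‖y‖
    rw [one_mul]
    calc ‖A (g y)‖ ≤ ‖B (g y)‖ := hAB _
      _ = ‖(y : K)‖ := by rw [hg]
      _ = ‖y‖ := rfl
  set f : ↥R →L[ℂ] L := f0.mkContinuous 1 hb with hf
  set e : ↥R →L[ℂ] ↥S := (R.subtypeL).codRestrict S (fun y => hRS y.2) with he
  have he_norm : ∀ y : ↥R, ‖e y‖ = ‖y‖ := fun y => rfl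
  have he_iso : Isometry e := AddMonoidHomClass.isometry_of_norm e he_norm
  have h_e : IsUniformInducing e := he_iso.isUniformInducing
  have h_dense : DenseRange e := by
    intro x
    have hx : (x : K) ∈ closure (R : Set K) := x.2
    rw [mem_closure_iff_seq_limit] at hx
    obtain ⟨u, hu, hul⟩ := hx
    have hv : Filter.Tendsto (fun n => e ⟨u n, hu n⟩) Filter.atTop (nhds x) := by
      rw [tendsto_subtype_rng]
      exact hul
    exact mem_closure_of_tendsto hv
      (Filter.Eventually.of_forall fun n => Set.mem_range_self _)
  set C : ↥S →L[ℂ] L := f.extend e with hCdef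
  have hfn : ‖f‖ ≤ 1 := f0.mkContinuous_norm_le zero_le_one hb
  have hCn : ‖C‖ ≤ 1 := by
    have h1 := opNorm_extend_le f h_dense (N := 1)
      (fun y => by rw [NNReal.coe_one, one_mul]; exact (he_norm y).ge)
    have h2 : ‖C‖ ≤ ((1:NNReal) : ℝ) * ‖f‖ := h1
    rw [NNReal.coe_one, one_mul] at h2
    exact h2.trans hfn
  have hC : ∀ x, ‖C x‖ ≤ ‖x‖ := fun x => by
    calc ‖C x‖ ≤ ‖C‖ * ‖x‖ := le_opNorm _ _
      _ ≤ 1 * ‖x‖ := mul_le_mul_of_nonneg_right hCn (norm_nonneg _)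
      _ = ‖x‖ := one_mul _
  refine ⟨C, hC, fun h => ?_⟩
  rw [show (⟨B h, Submodule.le_topologicalClosure _ (LinearMap.mem_range_self (B : H →ₗ[ℂ] K) h)⟩ : ↥S)
      = e ⟨B h, LinearMap.mem_range_self (B : H →ₗ[ℂ] K) h⟩ from rfl, hCdef, extend_eq f h_dense h_e]
  show A (g ⟨B h, LinearMap.mem_range_self (B : H →ₗ[ℂ] K) h⟩) = A h
  exact key _ _ (hg ⟨B h, LinearMap.mem_range_self (B : H →ₗ[ℂ] K) h⟩)

lemma denseRange_codRestrictClosure (B : H →L[ℂ] K) :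
    DenseRange (fun h : H => (⟨B h, Submodule.le_topologicalClosure _
      (LinearMap.mem_range_self (B : H →ₗ[ℂ] K) h)⟩ : (LinearMap.range (B : H →ₗ[ℂ] K)).topologicalClosure)) := by
  intro x
  have hx : (x : K) ∈ closure ((LinearMap.range (B : H →ₗ[ℂ] K) : Submodule ℂ K) : Set K) := x.2
  rw [mem_closure_iff_seq_limit] at hx
  obtain ⟨u, hu, hul⟩ := hx
  choose w hw using hu
  have hv : Filter.Tendsto (fun n => (⟨B (w n), Submodule.le_topologicalClosure _
      (LinearMap.mem_range_self (B : H →ₗ[ℂ] K) (w n))⟩ : (LinearMap.range (B : H →ₗ[ℂ] K)).topologicalClosure))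
      Filter.atTop (nhds x) := by
    rw [tendsto_subtype_rng]
    simpa only [show ∀ n, B (w n) = u n from hw] using hul
  exact mem_closure_of_tendsto hv
    (Filter.Eventually.of_forall fun n => Set.mem_range_self _)

lemma adjoint_codRestrict (f : H →L[ℂ] K) (S : Submodule ℂ K) [CompleteSpace ↥S]
    (hS : ∀ x, f x ∈ S) :
    adjoint (f.codRestrict S hS) = adjoint f ∘L S.subtypeL := by
  symm
  rw [eq_adjoint_iff]
  intro x y
  rw [Submodule.coe_inner]
  exact adjoint_inner_left f y (x : K)

lemma row_contraction (T : H →L[ℂ] H) (hT : ∀ h, ‖T h‖ ≤ ‖h‖) (h g : H) :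
    ‖T h + defectOp (adjoint T) g‖ ^ 2 ≤ ‖h‖ ^ 2 + ‖g‖ ^ 2 := by
  set D := defectOp (adjoint T) with hD
  set k := T h + D g with hk
  have hTadj : ∀ x, ‖adjoint T x‖ ≤ ‖x‖ := adjoint_contraction T hT
  have hDk : ‖D k‖ ^ 2 = ‖k‖ ^ 2 - ‖adjoint T k‖ ^ 2 := norm_defectOp_sq (adjoint T) hTadj k
  have hsym := (ContinuousLinearMap.isSelfAdjoint_iff_isSymmetric.mp
    (defectOp_selfAdjoint (adjoint T)))
  have h1 : (‖k‖ : ℝ) ^ 2 = RCLike.re ⟪T h, k⟫_ℂ + RCLike.re ⟪D g, k⟫_ℂ := by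
    rw [norm_sq_eq_re_inner (𝕜 := ℂ) k]
    nth_rewrite 1 [hk]
    rw [inner_add_left, map_add]
  have h2 : RCLike.re ⟪T h, k⟫_ℂ ≤ ‖h‖ * ‖adjoint T k‖ := by
    rw [← adjoint_inner_right T h k]
    exact re_inner_le_norm _ _
  have h3 : RCLike.re ⟪D g, k⟫_ℂ ≤ ‖g‖ * ‖D k‖ := by
    have h4 : ⟪D g, k⟫_ℂ = ⟪g, D k⟫_ℂ := hsym g k
    rw [h4]
    exact re_inner_le_norm _ _
  nlinarith [sq_nonneg (‖h‖ * ‖D k‖ - ‖g‖ * ‖adjoint T k‖), sq_nonneg ‖k‖,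
    norm_nonneg k, norm_nonneg h, norm_nonneg g, norm_nonneg (D k), norm_nonneg (adjoint T k),
    sq_nonneg (‖h‖ ^ 2 + ‖g‖ ^ 2 - ‖k‖ ^ 2)]

end MyAux

section Block

variable {E₁ E₂ F₁ F₂ : Type*} [NormedAddCommGroup E₁] [InnerProductSpace ℂ E₁]
  [NormedAddCommGroup E₂] [InnerProductSpace ℂ E₂]
  [NormedAddCommGroup F₁] [InnerProductSpace ℂ F₁]
  [NormedAddCommGroup F₂] [InnerProductSpace ℂ F₂]

/-- The `2 × 2` block operator `[[f₁₁, f₁₂], [f₂₁, f₂₂]]` between `ℓ²`-direct sums of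
Hilbert spaces. -/
def blockOp (f₁₁ : E₁ →L[ℂ] F₁) (f₁₂ : E₂ →L[ℂ] F₁) (f₂₁ : E₁ →L[ℂ] F₂) (f₂₂ : E₂ →L[ℂ] F₂) :
    WithLp 2 (E₁ × E₂) →L[ℂ] WithLp 2 (F₁ × F₂) :=
  ((WithLp.prodContinuousLinearEquiv 2 ℂ F₁ F₂).symm : F₁ × F₂ →L[ℂ] WithLp 2 (F₁ × F₂)) ∘L
    ((f₁₁.coprod f₁₂).prod (f₂₁.coprod f₂₂)) ∘L
    ((WithLp.prodContinuousLinearEquiv 2 ℂ E₁ E₂ : WithLp 2 (E₁ × E₂) ≃L[ℂ] E₁ × E₂) :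
      WithLp 2 (E₁ × E₂) →L[ℂ] E₁ × E₂)

end Block


open scoped InnerProductSpace

set_option maxHeartbeats 4000000
set_option synthInstance.maxHeartbeats 1000000

section BlockAux
variable {E₁ E₂ F₁ F₂ : Type*} [NormedAddCommGroup E₁] [InnerProductSpace ℂ E₁]
  [NormedAddCommGroup E₂] [InnerProductSpace ℂ E₂]
  [NormedAddCommGroup F₁] [InnerProductSpace ℂ F₁]
  [NormedAddCommGroup F₂] [InnerProductSpace ℂ F₂]

set_option linter.unusedSectionVars false

lemma blockOp_apply (f₁₁ : E₁ →L[ℂ] F₁) (f₁₂ : E₂ →L[ℂ] F₁) (f₂₁ : E₁ →L[ℂ] F₂)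
    (f₂₂ : E₂ →L[ℂ] F₂) (x : WithLp 2 (E₁ × E₂)) :
    blockOp f₁₁ f₁₂ f₂₁ f₂₂ x = (WithLp.equiv 2 (F₁ × F₂)).symm
      (f₁₁ x.fst + f₁₂ x.snd, f₂₁ x.fst + f₂₂ x.snd) := rfl

lemma norm_sq_withLp (a : F₁) (b : F₂) :
    ‖(WithLp.equiv 2 (F₁ × F₂)).symm (a, b)‖ ^ 2 = ‖a‖ ^ 2 + ‖b‖ ^ 2 := by
  rw [WithLp.prod_norm_sq_eq_of_L2]
  rfl

lemma withLp_eta (x : WithLp 2 (E₁ × E₂)) :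
    (WithLp.equiv 2 (E₁ × E₂)).symm (x.fst, x.snd) = x := rfl

end BlockAux

/-- An upper triangular block operator `T = [[T₁, X], [0, T₂]]` on `H₁ ⊕ H₂`
is a contraction if and only if `T₁` and `T₂` are contractions and `X = D_{T₁*} Γ D_{T₂}` for
some contraction `Γ : 𝒟_{T₂} → 𝒟_{T₁*}` (where `D_{T₂}` is viewed as a map `H₂ → 𝒟_{T₂}` and
`D_{T₁*}` acts on `𝒟_{T₁*} ⊆ H₁`). -/
theorem stmt2 {H₁ H₂ : Type*} [NormedAddCommGroup H₁] [InnerProductSpace ℂ H₁] [CompleteSpace H₁]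
    [NormedAddCommGroup H₂] [InnerProductSpace ℂ H₂] [CompleteSpace H₂]
    (T₁ : H₁ →L[ℂ] H₁) (T₂ : H₂ →L[ℂ] H₂) (X : H₂ →L[ℂ] H₁) :
    (∀ h : WithLp 2 (H₁ × H₂), ‖blockOp T₁ X 0 T₂ h‖ ≤ ‖h‖) ↔
      (∀ h : H₁, ‖T₁ h‖ ≤ ‖h‖) ∧ (∀ h : H₂, ‖T₂ h‖ ≤ ‖h‖) ∧
        ∃ Γ : defectSpace T₂ →L[ℂ] defectSpace (adjoint T₁),
          (∀ x : defectSpace T₂, ‖Γ x‖ ≤ ‖x‖) ∧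
          X = defectOp (adjoint T₁) ∘L (defectSpace (adjoint T₁)).subtypeL ∘L Γ ∘L
                Submodule.orthogonalProjectionOnto (defectSpace T₂) ∘L defectOp T₂ := by
  classical
  have sqle : ∀ a b : ℝ, 0 ≤ a → 0 ≤ b → a ^ 2 ≤ b ^ 2 → a ≤ b := by
    intro a b ha hb h; nlinarith
  haveI : CompleteSpace ((LinearMap.range (defectOp T₂ : H₂ →ₗ[ℂ] H₂)).topologicalClosure : Submodule ℂ H₂) :=
    (Submodule.isClosed_topologicalClosure _).completeSpace_coe
  haveI : CompleteSpace
      ((LinearMap.range (defectOp (adjoint T₁) : H₁ →ₗ[ℂ] H₁)).topologicalClosure : Submodule ℂ H₁) :=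
    (Submodule.isClosed_topologicalClosure _).completeSpace_coe
  constructor
  · intro hT
    have happ : ∀ (h₁ : H₁) (h₂ : H₂),
        blockOp T₁ X 0 T₂ ((WithLp.equiv 2 (H₁ × H₂)).symm (h₁, h₂))
        = (WithLp.equiv 2 (H₁ × H₂)).symm (T₁ h₁ + X h₂, T₂ h₂) := by
      intro h₁ h₂
      rw [blockOp_apply]
      congr 1
      simp
    have hsq : ∀ (h₁ : H₁) (h₂ : H₂),
        ‖T₁ h₁ + X h₂‖ ^ 2 + ‖T₂ h₂‖ ^ 2 ≤ ‖h₁‖ ^ 2 + ‖h₂‖ ^ 2 := by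
      intro h₁ h₂
      have h0 := hT ((WithLp.equiv 2 (H₁ × H₂)).symm (h₁, h₂))
      rw [happ] at h0
      have h2 := pow_le_pow_left₀ (norm_nonneg _) h0 2
      rw [norm_sq_withLp, norm_sq_withLp] at h2
      exact h2
    have hc1 : ∀ h : H₁, ‖T₁ h‖ ≤ ‖h‖ := by
      intro h
      have h0 := hsq h 0
      simp only [map_zero, add_zero, norm_zero] at h0
      refine sqle _ _ (norm_nonneg _) (norm_nonneg _) ?_
      nlinarith [h0]
    have hc2 : ∀ h : H₂, ‖T₂ h‖ ≤ ‖h‖ := by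
      intro h
      have h0 := hsq 0 h
      simp only [map_zero, zero_add, norm_zero] at h0
      refine sqle _ _ (norm_nonneg _) (norm_nonneg _) ?_
      nlinarith [h0, sq_nonneg ‖X h‖]
    have hstar : ∀ (h₁ : H₁) (h₂ : H₂),
        ‖T₁ h₁ + X h₂‖ ^ 2 ≤ ‖h₁‖ ^ 2 + ‖defectOp T₂ h₂‖ ^ 2 := by
      intro h₁ h₂
      rw [norm_defectOp_sq T₂ hc2]
      linarith [hsq h₁ h₂]
    have hXD : ∀ h₂ : H₂, ‖X h₂‖ ≤ ‖defectOp T₂ h₂‖ := by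
      intro h₂
      have h0 := hstar 0 h₂
      simp only [map_zero, zero_add, norm_zero] at h0
      refine sqle _ _ (norm_nonneg _) (norm_nonneg _) ?_
      nlinarith [h0]
    obtain ⟨Y, hY1, hY2⟩ := douglas X (defectOp T₂) hXD
    have hrow : ∀ (h₁ : H₁) (d : (LinearMap.range (defectOp T₂ : H₂ →ₗ[ℂ] H₂)).topologicalClosure),
        ‖T₁ h₁ + Y d‖ ^ 2 ≤ ‖h₁‖ ^ 2 + ‖d‖ ^ 2 := by
      intro h₁ d
      refine DenseRange.induction_on (denseRange_codRestrictClosure (defectOp T₂)) d ?_ ?_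
      · apply isClosed_le
        · exact (continuous_const.add Y.continuous).norm.pow 2
        · exact continuous_const.add (continuous_norm.pow 2)
      · intro h₂
        show ‖T₁ h₁ + Y _‖ ^ 2 ≤ ‖h₁‖ ^ 2 + ‖(_ : (LinearMap.range (defectOp T₂ : H₂ →ₗ[ℂ] H₂)).topologicalClosure)‖ ^ 2
        rw [hY2 h₂]
        exact hstar h₁ h₂
    have hadj1 : ∀ k, ‖adjoint T₁ k‖ ≤ ‖k‖ := adjoint_contraction T₁ hc1
    have hcol : ∀ k : H₁, ‖adjoint T₁ k‖ ^ 2 + ‖adjoint Y k‖ ^ 2 ≤ ‖k‖ ^ 2 := by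
      intro k
      set h₁ := adjoint T₁ k with hh₁
      set d := adjoint Y k with hd
      have e1 : ⟪k, T₁ h₁⟫_ℂ = ⟪h₁, h₁⟫_ℂ := by
        rw [← ContinuousLinearMap.adjoint_inner_left T₁ h₁ k]
      have e2 : ⟪k, Y d⟫_ℂ = ⟪d, d⟫_ℂ := by
        rw [← ContinuousLinearMap.adjoint_inner_left Y d k]
      have h1 : ‖h₁‖ ^ 2 + ‖d‖ ^ 2 = RCLike.re ⟪k, T₁ h₁ + Y d⟫_ℂ := by
        rw [inner_add_right, map_add, e1, e2, ← norm_sq_eq_re_inner (𝕜 := ℂ),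
          ← norm_sq_eq_re_inner (𝕜 := ℂ)]
      have h2 : RCLike.re ⟪k, T₁ h₁ + Y d⟫_ℂ ≤ ‖k‖ * ‖T₁ h₁ + Y d‖ := re_inner_le_norm _ _
      have h3 : ‖T₁ h₁ + Y d‖ ^ 2 ≤ ‖h₁‖ ^ 2 + ‖d‖ ^ 2 := hrow h₁ d
      nlinarith [norm_nonneg (T₁ h₁ + Y d), norm_nonneg k,
        sq_nonneg (‖T₁ h₁ + Y d‖ - ‖k‖), norm_nonneg h₁, norm_nonneg d]
    have hYD : ∀ k : H₁, ‖adjoint Y k‖ ≤ ‖defectOp (adjoint T₁) k‖ := by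
      intro k
      refine sqle _ _ (norm_nonneg _) (norm_nonneg _) ?_
      rw [norm_defectOp_sq (adjoint T₁) hadj1]
      linarith [hcol k]
    obtain ⟨G, hG1, hG2⟩ := douglas (adjoint Y) (defectOp (adjoint T₁)) hYD
    refine ⟨hc1, hc2, adjoint G, ?_, ?_⟩
    · intro x
      have hGn : ‖G‖ ≤ 1 := opNorm_le_bound _ zero_le_one (fun y => by rw [one_mul]; exact hG1 y)
      calc ‖adjoint G x‖ ≤ ‖adjoint G‖ * ‖x‖ := le_opNorm _ _
        _ = ‖G‖ * ‖x‖ := by rw [LinearIsometryEquiv.norm_map adjoint G]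
        _ ≤ 1 * ‖x‖ := mul_le_mul_of_nonneg_right hGn (norm_nonneg _)
        _ = ‖x‖ := one_mul _
    · have hmem : ∀ k : H₁, defectOp (adjoint T₁) k ∈ defectSpace (adjoint T₁) :=
        fun k => Submodule.le_topologicalClosure _ (LinearMap.mem_range_self _ k)
      have hGB : G ∘L ((defectOp (adjoint T₁)).codRestrict (defectSpace (adjoint T₁)) hmem)
          = adjoint Y := by
        ext k
        exact congrArg Subtype.val (hG2 k)
      have h5 := adjoint_codRestrict (defectOp (adjoint T₁)) (defectSpace (adjoint T₁)) hmem
      have h4 : Y = (defectOp (adjoint T₁) ∘L (defectSpace (adjoint T₁)).subtypeL) ∘L adjoint G := by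
        rw [(defectOp_selfAdjoint (adjoint T₁)).adjoint_eq] at h5
        rw [← adjoint_adjoint Y, ← hGB]
        exact (adjoint_comp _ _).trans (congrArg (fun t => t.comp (adjoint G)) h5)
      ext h₂
      have hP : Submodule.orthogonalProjectionOnto (defectSpace T₂) (defectOp T₂ h₂)
          = ⟨defectOp T₂ h₂, Submodule.le_topologicalClosure _
              (LinearMap.mem_range_self _ h₂)⟩ :=
        Submodule.orthogonalProjectionOnto_mem_subspace_eq_self
          (⟨defectOp T₂ h₂, Submodule.le_topologicalClosure _
            (LinearMap.mem_range_self _ h₂)⟩ : defectSpace T₂)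
      simp only [comp_apply]
      rw [hP, ← hY2 h₂, h4]
      rfl
  · rintro ⟨hc1, hc2, Γ, hΓ, hX⟩
    intro v
    have hb : blockOp T₁ X 0 T₂ v
        = (WithLp.equiv 2 (H₁ × H₂)).symm (T₁ v.fst + X v.snd, T₂ v.snd) := by
      rw [blockOp_apply]
      congr 1
      simp
    refine sqle _ _ (norm_nonneg _) (norm_nonneg _) ?_
    rw [hb, norm_sq_withLp]
    conv_rhs => rw [← withLp_eta v]
    rw [norm_sq_withLp]
    have hmem : defectOp T₂ v.snd ∈ defectSpace T₂ :=
      Submodule.le_topologicalClosure _ (LinearMap.mem_range_self _ v.snd)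
    have hP : Submodule.orthogonalProjectionOnto (defectSpace T₂) (defectOp T₂ v.snd)
        = ⟨defectOp T₂ v.snd, hmem⟩ :=
      Submodule.orthogonalProjectionOnto_mem_subspace_eq_self (⟨defectOp T₂ v.snd, hmem⟩ : defectSpace T₂)
    set g : H₁ := ((defectSpace (adjoint T₁)).subtypeL)
      (Γ (Submodule.orthogonalProjectionOnto (defectSpace T₂) (defectOp T₂ v.snd))) with hg
    have hXv : X v.snd = defectOp (adjoint T₁) g := by rw [hX]; rfl
    have hrow := row_contraction T₁ hc1 v.fst g
    have hgn : ‖g‖ ≤ ‖defectOp T₂ v.snd‖ := by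
      have h1 : ‖g‖ = ‖Γ (Submodule.orthogonalProjectionOnto (defectSpace T₂) (defectOp T₂ v.snd))‖ := rfl
      rw [h1]
      calc ‖Γ (Submodule.orthogonalProjectionOnto (defectSpace T₂) (defectOp T₂ v.snd))‖
          ≤ ‖Submodule.orthogonalProjectionOnto (defectSpace T₂) (defectOp T₂ v.snd)‖ := hΓ _
        _ = ‖(⟨defectOp T₂ v.snd, hmem⟩ : defectSpace T₂)‖ := by rw [hP]
        _ = ‖defectOp T₂ v.snd‖ := rfl
    have hD2 := norm_defectOp_sq T₂ hc2 v.snd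
    rw [hXv]
    have hg2 := pow_le_pow_left₀ (norm_nonneg g) hgn 2
    linarith [hrow, hg2, hD2]
end
end

section
/- Let T be a completely nonunitary contraction on a complex Hilbert space H, let M be a Hilbert space, let N be a contraction on a Hilbert space H_0 that is nilpotent of order m, let V_1 : 𝒟_{N*} ⊕ M → 𝒟_{T*} be a coisometry and V_2 : 𝒟_T → 𝒟_N ⊕ M be an isometry, and suppose Θ_T(z) = V_1 [[Θ_N(z), 0],[0, I_M]] V_2 for all z ∈ 𝔻. Then Θ_T is a polynomial of degree at most m, i.e., there exist bounded operators A_0, …, A_m from 𝒟_T to 𝒟_{T*} with Θ_T(z) = Σ_{k=0}^m z^k A_k for all z ∈ 𝔻. -/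
noncomputable section

open ContinuousLinearMap

/-- A contraction `T` is completely nonunitary if there is no nonzero closed subspace
reducing `T` on which `T` restricts to a unitary operator (equivalently, on which both `T`
and `T*` are isometric). -/
def IsCnu {H : Type*} [NormedAddCommGroup H] [InnerProductSpace ℂ H] [CompleteSpace H]
    (T : H →L[ℂ] H) : Prop :=
  ∀ M : Submodule ℂ H, IsClosed (M : Set H) →
    (∀ x ∈ M, T x ∈ M) → (∀ x ∈ M, adjoint T x ∈ M) →
    (∀ x ∈ M, ‖T x‖ = ‖x‖) → (∀ x ∈ M, ‖adjoint T x‖ = ‖x‖) → M = ⊥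


section Stmt8Aux

variable {E₁ E₂ F₁ F₂ : Type*} [NormedAddCommGroup E₁] [InnerProductSpace ℂ E₁]
  [NormedAddCommGroup E₂] [InnerProductSpace ℂ E₂]
  [NormedAddCommGroup F₁] [InnerProductSpace ℂ F₁]
  [NormedAddCommGroup F₂] [InnerProductSpace ℂ F₂]

theorem stmt8aux_blockOp_add (a a' : E₁ →L[ℂ] F₁) (b b' : E₂ →L[ℂ] F₁) (c c' : E₁ →L[ℂ] F₂)
    (d d' : E₂ →L[ℂ] F₂) :
    blockOp (a + a') (b + b') (c + c') (d + d') = blockOp a b c d + blockOp a' b' c' d' := by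
  ext x <;> simp [blockOp, ← WithLp.toLp_add, Prod.add_def] <;> constructor <;> abel

theorem stmt8aux_blockOp_smul (z : ℂ) (a : E₁ →L[ℂ] F₁) (b : E₂ →L[ℂ] F₁) (c : E₁ →L[ℂ] F₂)
    (d : E₂ →L[ℂ] F₂) :
    blockOp (z • a) (z • b) (z • c) (z • d) = z • blockOp a b c d := by
  ext x <;> simp [blockOp, ← WithLp.toLp_smul, Prod.smul_def]

theorem stmt8aux_blockOp_sum (s : Finset ℕ) (f : ℕ → (E₁ →L[ℂ] F₁)) :
    blockOp (∑ k ∈ s, f k) (0 : E₂ →L[ℂ] F₁) (0 : E₁ →L[ℂ] F₂) (0 : E₂ →L[ℂ] F₂) =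
      ∑ k ∈ s, blockOp (f k) 0 0 0 := by
  induction s using Finset.induction with
  | empty => ext x <;> simp [blockOp]
  | insert _ _ h ih =>
    rw [Finset.sum_insert h, Finset.sum_insert h, ← ih]
    ext x <;> simp [blockOp, ← WithLp.toLp_add, Prod.add_def]

theorem stmt8aux_comp_sum_comp {H K H' K' : Type*} [NormedAddCommGroup H]
    [InnerProductSpace ℂ H] [NormedAddCommGroup K] [InnerProductSpace ℂ K]
    [NormedAddCommGroup H'] [InnerProductSpace ℂ H'] [NormedAddCommGroup K']
    [InnerProductSpace ℂ K']
    (f : K →L[ℂ] H') (s : Finset ℕ) (c : ℕ → ℂ) (g : ℕ → (K' →L[ℂ] K)) (h : H →L[ℂ] K') :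
    f ∘L (∑ k ∈ s, c k • g k) ∘L h = ∑ k ∈ s, c k • (f ∘L g k ∘L h) := by
  ext x; simp

theorem stmt8aux_inverse {H : Type*} [NormedAddCommGroup H] [InnerProductSpace ℂ H]
    [CompleteSpace H] (N : H →L[ℂ] H) (m : ℕ) (hNnil : N ^ m = 0) (z : ℂ) :
    Ring.inverse (1 - z • ContinuousLinearMap.adjoint N) =
      ∑ k ∈ Finset.range m, (z • ContinuousLinearMap.adjoint N) ^ k := by
  set x := z • ContinuousLinearMap.adjoint N with hx
  have hxm : x ^ m = 0 := by
    rw [hx, smul_pow, ← ContinuousLinearMap.star_eq_adjoint, ← star_pow, hNnil]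
    simp
  have h1 : (1 - x) * ∑ k ∈ Finset.range m, x ^ k = 1 := by
    have h := mul_geom_sum x m
    rw [hxm] at h
    have h2 : -((x - 1) * ∑ k ∈ Finset.range m, x ^ k) = -(0 - 1) := by rw [h]
    rw [← neg_mul, neg_sub] at h2; simpa using h2
  have h2 : (∑ k ∈ Finset.range m, x ^ k) * (1 - x) = 1 := by
    have h := geom_sum_mul x m
    rw [hxm] at h
    have h2 : -((∑ k ∈ Finset.range m, x ^ k) * (x - 1)) = -(0 - 1) := by rw [h]
    rw [← mul_neg, neg_sub] at h2; simpa using h2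
  exact Ring.inverse_unit ⟨1 - x, _, h1, h2⟩

/-- The coefficients of the (full-space) characteristic function of a nilpotent contraction. -/
def stmt8aux_coeff {H : Type*} [NormedAddCommGroup H] [InnerProductSpace ℂ H]
    [CompleteSpace H] (N : H →L[ℂ] H) : ℕ → (H →L[ℂ] H)
  | 0 => -N
  | k + 1 => defectOp (ContinuousLinearMap.adjoint N) ∘L
      ((ContinuousLinearMap.adjoint N) ^ k) ∘L defectOp N

theorem stmt8aux_charFunFull {H : Type*} [NormedAddCommGroup H] [InnerProductSpace ℂ H]
    [CompleteSpace H] (N : H →L[ℂ] H) (m : ℕ) (hNnil : N ^ m = 0) (z : ℂ) :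
    charFunFull N z = ∑ k ∈ Finset.range (m + 1), z ^ k • stmt8aux_coeff N k := by
  rw [Finset.sum_range_succ']
  simp only [pow_zero, one_smul, stmt8aux_coeff]
  rw [charFunFull, stmt8aux_inverse N m hNnil z, add_comm]
  congr 1
  ext x
  simp [smul_pow, smul_smul, pow_succ, mul_comm, Finset.sum_apply, Finset.smul_sum]

end Stmt8Aux

set_option maxHeartbeats 1000000

/-- (Weak converse of the main theorem) If `T` is a c.n.u. contraction and
`Θ_T(z) = V₁ [[Θ_N(z), 0], [0, 1]] V₂` on `𝔻`, where `N` is a contraction nilpotent of order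
`m`, `V₁ : 𝒟_{N*} ⊕ M → 𝒟_{T*}` is a coisometry and `V₂ : 𝒟_T → 𝒟_N ⊕ M` is an isometry,
then `Θ_T` is a polynomial of degree at most `m`. -/
theorem stmt8 {H H₀ M : Type*}
    [NormedAddCommGroup H] [InnerProductSpace ℂ H] [CompleteSpace H]
    [NormedAddCommGroup H₀] [InnerProductSpace ℂ H₀] [CompleteSpace H₀]
    [NormedAddCommGroup M] [InnerProductSpace ℂ M] [CompleteSpace M]
    (T : H →L[ℂ] H) (hT : ∀ h : H, ‖T h‖ ≤ ‖h‖) (hcnu : IsCnu T)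
    (m : ℕ) (hm : 1 ≤ m)
    (N : H₀ →L[ℂ] H₀) (hN : ∀ h : H₀, ‖N h‖ ≤ ‖h‖)
    (hNnil : N ^ m = 0) (hNnil' : N ^ (m - 1) ≠ 0)
    (V₁ : WithLp 2 (defectSpace (adjoint N) × M) →L[ℂ] defectSpace (adjoint T))
    (hV₁ : V₁ ∘L adjoint V₁ = 1)
    (V₂ : defectSpace T →L[ℂ] WithLp 2 (defectSpace N × M))
    (hV₂ : adjoint V₂ ∘L V₂ = 1)
    (hfac : ∀ z : ℂ, ‖z‖ < 1 →
      charFun T z = V₁ ∘L blockOp (charFun N z) 0 0 1 ∘L V₂) :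
    ∃ A : ℕ → (defectSpace T →L[ℂ] defectSpace (adjoint T)),
      ∀ z : ℂ, ‖z‖ < 1 →
        charFun T z = ∑ k ∈ Finset.range (m + 1), z ^ k • A k := by
  classical
  set PC : ℕ → (defectSpace N →L[ℂ] defectSpace (adjoint N)) := fun k =>
    Submodule.orthogonalProjectionOnto (defectSpace (adjoint N)) ∘L stmt8aux_coeff N k ∘L
      (defectSpace N).subtypeL with hPC
  have hcharN : ∀ z : ℂ, charFun N z = ∑ k ∈ Finset.range (m + 1), z ^ k • PC k := by
    intro z
    rw [charFun, stmt8aux_charFunFull N m hNnil z, stmt8aux_comp_sum_comp]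
  refine ⟨fun k => V₁ ∘L blockOp (PC k) 0 0 0 ∘L V₂ +
      (if k = 0 then V₁ ∘L blockOp 0 0 0 (1 : M →L[ℂ] M) ∘L V₂ else 0), ?_⟩
  intro z hz
  rw [hfac z hz, hcharN z]
  have hsplit : blockOp (∑ k ∈ Finset.range (m + 1), z ^ k • PC k) 0 0 (1 : M →L[ℂ] M) =
      (∑ k ∈ Finset.range (m + 1), z ^ k • blockOp (PC k) 0 0 0) +
        blockOp 0 0 0 (1 : M →L[ℂ] M) := by
    have h1 := stmt8aux_blockOp_add (∑ k ∈ Finset.range (m + 1), z ^ k • PC k)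
      (0 : defectSpace N →L[ℂ] defectSpace (adjoint N)) (0 : M →L[ℂ] defectSpace (adjoint N))
      (0 : M →L[ℂ] defectSpace (adjoint N)) (0 : defectSpace N →L[ℂ] M)
      (0 : defectSpace N →L[ℂ] M) (0 : M →L[ℂ] M) (1 : M →L[ℂ] M)
    simp only [add_zero, zero_add] at h1
    rw [h1, stmt8aux_blockOp_sum]
    congr 1
    refine Finset.sum_congr rfl fun k _ => ?_
    have h2 := stmt8aux_blockOp_smul (z ^ k) (PC k) (0 : M →L[ℂ] defectSpace (adjoint N))
      (0 : defectSpace N →L[ℂ] M) (0 : M →L[ℂ] M)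
    simpa using h2
  rw [hsplit]
  simp only [ContinuousLinearMap.add_comp, ContinuousLinearMap.comp_add]
  rw [stmt8aux_comp_sum_comp]
  simp only [smul_add, Finset.sum_add_distrib, smul_ite, smul_zero, Finset.sum_ite_eq',
    Finset.mem_range, pow_zero, one_smul]
  simp
end
end
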